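/- Let c ∈ ℝ and let Y be a nonempty closed subset of {x ∈ ℝⁿ : x₁ ≥ … ≥ xₙ ≥ c}. Let A = U†[a]U be Hermitian with a₁ ≥ … ≥ aₙ ≥ c and U unitary. Then there exists b ∈ Y such that for every unitary V and every d ∈ Y, ‖A − U†[b]U‖_F ≤ ‖A − V†[d]V‖_F. -/

import Mathlib

open Matrix
open scoped ComplexOrder

/-- Squared Frobenius norm of a complex matrix. -/
noncomputable def frobSq {n : ℕ} (A : Matrix (Fin n) (Fin n) ℂ) : ℝ :=
  ((Aᴴ * A).trace).re

section aux

variable {m : ℕ}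

lemma aux_rearrangement (a d : Fin m → ℝ) (ha : Antitone a) (hd : Antitone d)
    {S : Matrix (Fin m) (Fin m) ℝ} (hS : S ∈ doublyStochastic ℝ (Fin m)) :
    ∑ i, ∑ j, a i * d j * S i j ≤ ∑ i, a i * d i := by
  have hmono : Monovary a d := by
    intro i j hij
    rcases le_or_gt j i with h | h
    · exact ha h
    · exact absurd (hd h.le) (not_le.2 hij)
  have hlin : IsLinearMap ℝ (fun M : Matrix (Fin m) (Fin m) ℝ => ∑ i, ∑ j, a i * d j * M i j) := by
    constructor
    · intro M N
      simp [Matrix.add_apply, mul_add, Finset.sum_add_distrib]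
    · intro c M
      simp only [Matrix.smul_apply, smul_eq_mul, Finset.mul_sum]
      congr 1; funext i; congr 1; funext j; ring
  have hconv : Convex ℝ {M : Matrix (Fin m) (Fin m) ℝ |
      (∑ i, ∑ j, a i * d j * M i j) ≤ ∑ i, a i * d i} :=
    convex_halfSpace_le hlin _
  have hsub : {M | ∃ σ : Equiv.Perm (Fin m), σ.permMatrix ℝ = M} ⊆
      {M : Matrix (Fin m) (Fin m) ℝ | (∑ i, ∑ j, a i * d j * M i j) ≤ ∑ i, a i * d i} := by
    rintro _ ⟨σ, rfl⟩
    have hpm : ∀ i j, (σ.permMatrix ℝ) i j = if σ i = j then (1 : ℝ) else 0 := by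
      intro i j
      simp [Equiv.Perm.permMatrix, PEquiv.toMatrix_apply, Equiv.toPEquiv_apply, Option.mem_def]
    have hperm : ∀ i, (∑ j, a i * d j * (σ.permMatrix ℝ) i j) = a i * d (σ i) := by
      intro i
      have h1 : ∀ j, a i * d j * (σ.permMatrix ℝ) i j
          = if σ i = j then a i * d j else 0 := by
        intro j
        rw [hpm]
        by_cases h : σ i = j <;> simp [h]
      simp only [h1]
      simp
    simp only [Set.mem_setOf_eq, hperm]
    simpa using hmono.sum_smul_comp_perm_le_sum_smul (σ := σ)
  have hS' : S ∈ (doublyStochastic ℝ (Fin m) : Set (Matrix (Fin m) (Fin m) ℝ)) := hS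
  rw [doublyStochastic_eq_convexHull_permMatrix] at hS'
  exact convexHull_min hsub hconv hS'

lemma aux_unitary_doublyStochastic {W : Matrix (Fin m) (Fin m) ℂ}
    (hW : W ∈ Matrix.unitaryGroup (Fin m) ℂ) :
    (fun i j => Complex.normSq (W i j)) ∈ doublyStochastic ℝ (Fin m) := by
  refine (mem_doublyStochastic_iff_sum (M := (fun i j => Complex.normSq (W i j) : Matrix (Fin m) (Fin m) ℝ))).2 ?_
  beta_reduce
  have h1 : W * Wᴴ = 1 := by
    simpa [Matrix.star_eq_conjTranspose] using (Matrix.mem_unitaryGroup_iff.mp hW)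
  have h2 : Wᴴ * W = 1 := by
    simpa [Matrix.star_eq_conjTranspose] using (Matrix.mem_unitaryGroup_iff'.mp hW)
  refine ⟨fun i j => Complex.normSq_nonneg _, ?_, ?_⟩
  · intro i
    have h := congrFun (congrFun h1 i) i
    simp only [Matrix.mul_apply, Matrix.conjTranspose_apply, Matrix.one_apply_eq] at h
    have hc : ((∑ j, Complex.normSq (W i j) : ℝ) : ℂ) = 1 := by
      rw [← h]
      push_cast
      refine Finset.sum_congr rfl fun j _ => ?_
      rw [← Complex.mul_conj, RCLike.star_def]
    exact_mod_cast hc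
  · intro j
    have h := congrFun (congrFun h2 j) j
    simp only [Matrix.mul_apply, Matrix.conjTranspose_apply, Matrix.one_apply_eq] at h
    have hc : ((∑ i, Complex.normSq (W i j) : ℝ) : ℂ) = 1 := by
      rw [← h]
      push_cast
      refine Finset.sum_congr rfl fun i _ => ?_
      rw [Complex.normSq_eq_conj_mul_self, RCLike.star_def]
    exact_mod_cast hc

lemma aux_trace_entry (a d : Fin m → ℝ) (W : Matrix (Fin m) (Fin m) ℂ) :
    ((Matrix.diagonal (fun i => (a i : ℂ)) * W * Matrix.diagonal (fun i => (d i : ℂ)) * Wᴴ).trace).re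
      = ∑ i, ∑ j, a i * d j * Complex.normSq (W i j) := by
  have hentry : ∀ i : Fin m,
      ((Matrix.diagonal (fun i => (a i : ℂ)) * W * Matrix.diagonal (fun i => (d i : ℂ)) * Wᴴ) i i)
        = ((∑ j, a i * d j * Complex.normSq (W i j) : ℝ) : ℂ) := by
    intro i
    rw [Matrix.mul_apply]
    push_cast
    refine Finset.sum_congr rfl fun j _ => ?_
    rw [Matrix.mul_diagonal, Matrix.diagonal_mul, Matrix.conjTranspose_apply]
    have h : (a i : ℂ) * W i j * (d j : ℂ) * star (W i j)
        = (a i : ℂ) * (d j : ℂ) * (W i j * star (W i j)) := by ring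
    rw [h, RCLike.star_def, Complex.mul_conj]
  rw [Matrix.trace]
  simp only [Matrix.diag_apply, hentry]
  rw [← Complex.ofReal_sum]
  exact Complex.ofReal_re _

/-- Von Neumann-type trace inequality. -/
lemma aux_trace_le (a d : Fin m → ℝ) (ha : Antitone a) (hd : Antitone d)
    {W : Matrix (Fin m) (Fin m) ℂ} (hW : W ∈ Matrix.unitaryGroup (Fin m) ℂ) :
    ((Matrix.diagonal (fun i => (a i : ℂ)) * W * Matrix.diagonal (fun i => (d i : ℂ)) * Wᴴ).trace).re
      ≤ ∑ i, a i * d i := by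
  rw [aux_trace_entry]
  exact aux_rearrangement a d ha hd (aux_unitary_doublyStochastic hW)

lemma frobSq_conj {W : Matrix (Fin m) (Fin m) ℂ} (hW : W ∈ Matrix.unitaryGroup (Fin m) ℂ)
    (M : Matrix (Fin m) (Fin m) ℂ) : frobSq (Wᴴ * M * W) = frobSq M := by
  have h1 : W * Wᴴ = 1 := by
    simpa [Matrix.star_eq_conjTranspose] using (Matrix.mem_unitaryGroup_iff.mp hW)
  have hprod : (Wᴴ * M * W)ᴴ * (Wᴴ * M * W) = Wᴴ * (Mᴴ * M) * W := by
    simp only [Matrix.conjTranspose_mul, Matrix.conjTranspose_conjTranspose, Matrix.mul_assoc]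
    rw [show W * (Wᴴ * (M * W)) = W * Wᴴ * (M * W) by simp only [Matrix.mul_assoc], h1,
      Matrix.one_mul]
  have ht : ((Wᴴ * M * W)ᴴ * (Wᴴ * M * W)).trace = (Mᴴ * M).trace := by
    rw [hprod, Matrix.trace_mul_comm, ← Matrix.mul_assoc, h1, Matrix.one_mul]
  unfold frobSq
  rw [ht]

lemma frobSq_sub_diag (a d : Fin m → ℝ) {W : Matrix (Fin m) (Fin m) ℂ}
    (hW : W ∈ Matrix.unitaryGroup (Fin m) ℂ) :
    frobSq (Wᴴ * Matrix.diagonal (fun i => (a i : ℂ)) * W - Matrix.diagonal (fun i => (d i : ℂ)))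
      = ∑ i, a i ^ 2 + ∑ i, d i ^ 2
        - 2 * ((Matrix.diagonal (fun i => (a i : ℂ)) * W * Matrix.diagonal (fun i => (d i : ℂ)) * Wᴴ).trace).re := by
  have h1 : W * Wᴴ = 1 := by
    simpa [Matrix.star_eq_conjTranspose] using (Matrix.mem_unitaryGroup_iff.mp hW)
  have h2 : Wᴴ * W = 1 := by
    simpa [Matrix.star_eq_conjTranspose] using (Matrix.mem_unitaryGroup_iff'.mp hW)
  set Da := Matrix.diagonal (fun i => (a i : ℂ)) with hDa
  set Dd := Matrix.diagonal (fun i => (d i : ℂ)) with hDd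
  set B := Wᴴ * Da * W with hB
  have hstara : (star fun i => ((a i : ℝ) : ℂ)) = fun i => ((a i : ℝ) : ℂ) := by
    funext i
    simp only [Pi.star_apply, RCLike.star_def, Complex.conj_ofReal]
  have hstard : (star fun i => ((d i : ℝ) : ℂ)) = fun i => ((d i : ℝ) : ℂ) := by
    funext i
    simp only [Pi.star_apply, RCLike.star_def, Complex.conj_ofReal]
  have hDah : Daᴴ = Da := by
    rw [hDa, Matrix.diagonal_conjTranspose, hstara]
  have hDdh : Ddᴴ = Dd := by
    rw [hDd, Matrix.diagonal_conjTranspose, hstard]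
  have hBh : Bᴴ = B := by
    rw [hB]
    simp only [Matrix.conjTranspose_mul, Matrix.conjTranspose_conjTranspose, hDah,
      Matrix.mul_assoc]
  unfold frobSq
  have hexp : (B - Dd)ᴴ * (B - Dd) = B * B - B * Dd - Dd * B + Dd * Dd := by
    rw [Matrix.conjTranspose_sub, hBh, hDdh, Matrix.sub_mul, Matrix.mul_sub, Matrix.mul_sub]
    abel
  rw [hexp]
  have hBB : B * B = Wᴴ * (Da * Da) * W := by
    rw [hB]
    simp only [Matrix.mul_assoc]
    rw [show W * (Wᴴ * (Da * W)) = W * Wᴴ * (Da * W) by simp only [Matrix.mul_assoc], h1,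
      Matrix.one_mul]
  have htrBB : (B * B).trace = (Da * Da).trace := by
    rw [hBB, Matrix.trace_mul_comm, ← Matrix.mul_assoc, h1, Matrix.one_mul]
  have htrBD : (B * Dd).trace = (Da * W * Dd * Wᴴ).trace := by
    rw [hB, show Wᴴ * Da * W * Dd = Wᴴ * (Da * W * Dd) by simp only [Matrix.mul_assoc],
      Matrix.trace_mul_comm]
  have htrDB : (Dd * B).trace = (Da * W * Dd * Wᴴ).trace := by
    rw [Matrix.trace_mul_comm, htrBD]
  have htrDaDa : ((Da * Da).trace).re = ∑ i, a i ^ 2 := by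
    rw [hDa, Matrix.diagonal_mul_diagonal, Matrix.trace_diagonal,
      show (∑ i, ((a i : ℂ) * (a i : ℂ))) = ((∑ i, a i ^ 2 : ℝ) : ℂ) by
        push_cast; exact Finset.sum_congr rfl fun i _ => (pow_two _).symm,
      Complex.ofReal_re]
  have htrDdDd : ((Dd * Dd).trace).re = ∑ i, d i ^ 2 := by
    rw [hDd, Matrix.diagonal_mul_diagonal, Matrix.trace_diagonal,
      show (∑ i, ((d i : ℂ) * (d i : ℂ))) = ((∑ i, d i ^ 2 : ℝ) : ℂ) by
        push_cast; exact Finset.sum_congr rfl fun i _ => (pow_two _).symm,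
      Complex.ofReal_re]
  rw [Matrix.trace_add, Matrix.trace_sub, Matrix.trace_sub, htrBD, htrDB, htrBB]
  simp only [Complex.add_re, Complex.sub_re, htrDaDa, htrDdDd]
  ring

/-- The key lower bound: for unitary `U, V`, the Frobenius distance between `Uᴴ[a]U` and
`Vᴴ[d]V` is at least `∑ (a i - d i)^2`. -/
lemma aux_lower_bound (a d : Fin m → ℝ) (ha : Antitone a) (hd : Antitone d)
    {U V : Matrix (Fin m) (Fin m) ℂ} (hU : U ∈ Matrix.unitaryGroup (Fin m) ℂ)
    (hV : V ∈ Matrix.unitaryGroup (Fin m) ℂ) :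
    ∑ i, (a i - d i) ^ 2 ≤
      frobSq (Uᴴ * Matrix.diagonal (fun i => (a i : ℂ)) * U
        - Vᴴ * Matrix.diagonal (fun i => (d i : ℂ)) * V) := by
  set Da := Matrix.diagonal (fun i => (a i : ℂ))
  set Dd := Matrix.diagonal (fun i => (d i : ℂ))
  set W := U * Vᴴ with hWdef
  have hW : W ∈ Matrix.unitaryGroup (Fin m) ℂ := by
    rw [hWdef]
    have hVH : Vᴴ ∈ Matrix.unitaryGroup (Fin m) ℂ := by
      rw [Matrix.mem_unitaryGroup_iff]
      simpa [Matrix.star_eq_conjTranspose] using (Matrix.mem_unitaryGroup_iff'.mp hV)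
    exact mul_mem hU hVH
  have hVV : Vᴴ * V = 1 := by
    simpa [Matrix.star_eq_conjTranspose] using (Matrix.mem_unitaryGroup_iff'.mp hV)
  have hkey : Uᴴ * Da * U - Vᴴ * Dd * V = Vᴴ * (Wᴴ * Da * W - Dd) * V := by
    rw [Matrix.mul_sub, Matrix.sub_mul]
    congr 1
    rw [hWdef]
    simp only [Matrix.conjTranspose_mul, Matrix.conjTranspose_conjTranspose]
    calc Uᴴ * Da * U = Vᴴ * V * (Uᴴ * Da * U) * (Vᴴ * V) := by
          rw [hVV]; simp only [Matrix.one_mul, Matrix.mul_one]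
      _ = Vᴴ * (V * Uᴴ * Da * (U * Vᴴ)) * V := by simp only [Matrix.mul_assoc]
  rw [hkey, frobSq_conj hV, frobSq_sub_diag a d hW]
  have htr := aux_trace_le a d ha hd hW
  have hexpand : ∑ i, (a i - d i) ^ 2
      = ∑ i, (a i ^ 2 + d i ^ 2 - 2 * (a i * d i)) :=
    Finset.sum_congr rfl fun i _ => by ring
  have hsplit : ∑ i, (a i ^ 2 + d i ^ 2 - 2 * (a i * d i))
      = ∑ i, a i ^ 2 + ∑ i, d i ^ 2 - 2 * ∑ i, a i * d i := by
    rw [Finset.mul_sum, ← Finset.sum_add_distrib, ← Finset.sum_sub_distrib]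
  rw [hexpand, hsplit]
  linarith

lemma aux_eq_bound (a b : Fin m → ℝ) {U : Matrix (Fin m) (Fin m) ℂ}
    (hU : U ∈ Matrix.unitaryGroup (Fin m) ℂ) :
    frobSq (Uᴴ * Matrix.diagonal (fun i => (a i : ℂ)) * U
      - Uᴴ * Matrix.diagonal (fun i => (b i : ℂ)) * U) = ∑ i, (a i - b i) ^ 2 := by
  have hkey : Uᴴ * Matrix.diagonal (fun i => (a i : ℂ)) * U
      - Uᴴ * Matrix.diagonal (fun i => (b i : ℂ)) * U
      = Uᴴ * (Matrix.diagonal (fun i => ((a i - b i : ℝ) : ℂ))) * U := by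
    rw [← Matrix.sub_mul, ← Matrix.mul_sub]
    congr 2
    rw [Matrix.diagonal_sub]
    congr 1; funext i; push_cast; ring
  rw [hkey, frobSq_conj hU]
  unfold frobSq
  have hDh : (Matrix.diagonal (fun i => ((a i - b i : ℝ) : ℂ)))ᴴ
      = Matrix.diagonal (fun i => ((a i - b i : ℝ) : ℂ)) := by
    rw [Matrix.diagonal_conjTranspose,
      show (star fun i => ((a i - b i : ℝ) : ℂ)) = fun i => ((a i - b i : ℝ) : ℂ) by
        funext i
        simp only [Pi.star_apply, RCLike.star_def, Complex.conj_ofReal]]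
  rw [hDh, Matrix.diagonal_mul_diagonal, Matrix.trace_diagonal,
    show (∑ i, (((a i - b i : ℝ) : ℂ) * ((a i - b i : ℝ) : ℂ)))
        = ((∑ i, (a i - b i) ^ 2 : ℝ) : ℂ) by
      push_cast; exact Finset.sum_congr rfl fun i _ => (pow_two _).symm,
    Complex.ofReal_re]

end aux

/-- for a closed nonempty family `Y` of decreasing eigenvalue vectors bounded
below by `c`, the Frobenius-nearest matrix in `S_Y = {Vᴴ[d]V}` to `A = Uᴴ[a]U` can be chosen
with the same eigenvectors `U` as `A`. -/
theorem nearest_in_unitary_orbit_family {n : ℕ} (c : ℝ)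
    (Y : Set (Fin (n + 1) → ℝ)) (hYne : Y.Nonempty) (hYcl : IsClosed Y)
    (hYsub : Y ⊆ {x | Antitone x ∧ ∀ i, c ≤ x i})
    (U : Matrix (Fin (n + 1)) (Fin (n + 1)) ℂ)
    (hU : U ∈ Matrix.unitaryGroup (Fin (n + 1)) ℂ)
    (a : Fin (n + 1) → ℝ) (ha : Antitone a) (hac : ∀ i, c ≤ a i)
    (A : Matrix (Fin (n + 1)) (Fin (n + 1)) ℂ)
    (hA : A = Uᴴ * Matrix.diagonal (fun i => (a i : ℂ)) * U) :
    ∃ b ∈ Y, ∀ V ∈ Matrix.unitaryGroup (Fin (n + 1)) ℂ, ∀ d ∈ Y,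
      frobSq (A - Uᴴ * Matrix.diagonal (fun i => (b i : ℂ)) * U)
        ≤ frobSq (A - Vᴴ * Matrix.diagonal (fun i => (d i : ℂ)) * V) := by
  classical
  set g : (Fin (n + 1) → ℝ) → ℝ := fun d => ∑ i, (a i - d i) ^ 2 with hg
  have hgcont : Continuous g := by
    apply continuous_finset_sum
    intro i _
    exact ((continuous_const.sub (continuous_apply i)).pow 2)
  obtain ⟨y₀, hy₀⟩ := hYne
  set R := Real.sqrt (g y₀) with hR
  set K := Y ∩ {d | g d ≤ g y₀} with hK
  have hKne : K.Nonempty := ⟨y₀, hy₀, show g y₀ ≤ g y₀ from le_rfl⟩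
  have hKcl : IsClosed K := hYcl.inter (isClosed_le hgcont continuous_const)
  have hKsub : K ⊆ Set.Icc (fun _ => c) (fun i => a i + R) := by
    rintro d ⟨hdY, hdg⟩
    constructor
    · intro i; exact (hYsub hdY).2 i
    · intro i
      have hterm : (a i - d i) ^ 2 ≤ g y₀ := by
        calc (a i - d i) ^ 2 ≤ ∑ j, (a j - d j) ^ 2 :=
              Finset.single_le_sum (f := fun j => (a j - d j) ^ 2)
                (fun j _ => sq_nonneg _) (Finset.mem_univ i)
          _ ≤ g y₀ := hdg
      have habs : |a i - d i| ≤ R := by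
        rw [hR, ← Real.sqrt_sq_eq_abs]
        exact Real.sqrt_le_sqrt hterm
      have h2 := abs_le.mp habs
      show d i ≤ a i + R
      linarith [h2.1]
  have hKcp : IsCompact K := (isCompact_Icc).of_isClosed_subset hKcl hKsub
  obtain ⟨b, hbK, hbmin⟩ := hKcp.exists_isMinOn hKne (hgcont.continuousOn)
  refine ⟨b, hbK.1, ?_⟩
  intro V hV d hd
  have hgbd : g b ≤ g d := by
    by_cases hdK : d ∈ K
    · exact isMinOn_iff.mp hbmin d hdK
    · have hlt : g y₀ < g d := by
        by_contra hle
        exact hdK ⟨hd, not_lt.mp hle⟩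
      have hb : g b ≤ g y₀ := hbK.2
      linarith
  have hda : Antitone d := (hYsub hd).1
  rw [hA, aux_eq_bound a b hU]
  calc g b ≤ g d := hgbd
    _ ≤ _ := aux_lower_bound a d ha hda hU hV
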